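/- arXiv:cs/0605132 — 10 statements merged into one kernel-verified Lean document; each statement's English description precedes it below -/
import Mathlib

section
/- A partition P = {P_1, …, P_k} of N is D_c-stable if and only if the following two conditions hold: (i) for each i ∈ {1, …, k} and each pair of disjoint coalitions A and B with A ∪ B ⊆ P_i, one has v(A ∪ B) ≥ v(A) + v(B); and (ii) for each P-incompatible coalition T ⊆ N, one has ∑_{i=1}^k v(P_i ∩ T) ≥ v(T). -/
open Finset
open Finset

variable {α : Type*} [DecidableEq α] [Fintype α]

/-- A collection: a family of pairwise disjoint nonempty coalitions of `N`. -/
def IsCollection (C : Finset (Finset α)) : Prop :=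
  (∀ S ∈ C, S ≠ ∅) ∧ (C : Set (Finset α)).PairwiseDisjoint id

/-- A partition of the set `S`: pairwise disjoint nonempty subsets whose union is `S`. -/
def IsPartitionOf (S : Finset α) (C : Finset (Finset α)) : Prop :=
  IsCollection C ∧ C.sup id = S

/-- A partition of the grand coalition `N` (= `Finset.univ`). -/
def IsPartition (P : Finset (Finset α)) : Prop :=
  IsPartitionOf Finset.univ P

/-- The social welfare of a collection. -/
def sw (v : Finset α → ℝ) (C : Finset (Finset α)) : ℝ := ∑ S ∈ C, v S

/-- The collection `C` in the frame of the partition `P`: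
`C[P] = {P₁ ∩ U, …, P_k ∩ U} \ {∅}` where `U` is the union of `C`. -/
def frame (C P : Finset (Finset α)) : Finset (Finset α) :=
  (P.image (fun Pi => Pi ∩ C.sup id)).erase ∅

/-- `P` is `D_c`-stable: `sw(C[P]) ≥ sw(C)` for every collection `C` in `N`. -/
def DcStable (v : Finset α → ℝ) (P : Finset (Finset α)) : Prop :=
  ∀ C : Finset (Finset α), IsCollection C → sw v (frame C P) ≥ sw v C

/-- `P` is `D_p`-stable: `sw(P) ≥ sw(Q)` for every partition `Q` of `N`. -/
def DpStable (v : Finset α → ℝ) (P : Finset (Finset α)) : Prop :=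
  ∀ Q : Finset (Finset α), IsPartition Q → sw v P ≥ sw v Q

/-- `Q` is `P`-homogeneous: every `Q_j` is contained in some `P_i` or contains some `P_i`. -/
def Homogeneous (P Q : Finset (Finset α)) : Prop :=
  ∀ Qj ∈ Q, ∃ Pi ∈ P, Qj ⊆ Pi ∨ Pi ⊆ Qj

/-- `P` is `D_hp`-stable: `sw(P) ≥ sw(Q)` for every `P`-homogeneous partition `Q` of `N`. -/
def DhpStable (v : Finset α → ℝ) (P : Finset (Finset α)) : Prop :=
  ∀ Q : Finset (Finset α), IsPartition Q → Homogeneous P Q → sw v P ≥ sw v Q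

/-- `P` is strictly `D_c`-stable: `sw(C[P]) > sw(C)` for every collection `C`
that is not a subset of `P`. -/
def StrictlyDcStable (v : Finset α → ℝ) (P : Finset (Finset α)) : Prop :=
  ∀ C : Finset (Finset α), IsCollection C → ¬ C ⊆ P → sw v (frame C P) > sw v C

/-- `P` is strictly `D_p`-stable. -/
def StrictlyDpStable (v : Finset α → ℝ) (P : Finset (Finset α)) : Prop :=
  ∀ Q : Finset (Finset α), IsPartition Q → Q ≠ P → sw v P > sw v Q

/-- `P` is strictly `D_hp`-stable. -/
def StrictlyDhpStable (v : Finset α → ℝ) (P : Finset (Finset α)) : Prop :=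
  ∀ Q : Finset (Finset α), IsPartition Q → Homogeneous P Q → Q ≠ P → sw v P > sw v Q

/-- The merge rule: distinct coalitions `T₁, …, T_k` (`k ≥ 2`) of `P` with
`∑ v(T_j) < v(∪ T_j)` are replaced by their union. -/
def MergeStep (v : Finset α → ℝ) (P P' : Finset (Finset α)) : Prop :=
  ∃ T : Finset (Finset α), T ⊆ P ∧ 2 ≤ T.card ∧
    ∑ S ∈ T, v S < v (T.sup id) ∧ P' = insert (T.sup id) (P \ T)

/-- The split rule: a coalition `T` of `P` admitting a partition `{T₁, …, T_k}` (`k ≥ 2`)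
with `v(T) < ∑ v(T_j)` is replaced by the coalitions `T₁, …, T_k`. -/
def SplitStep (v : Finset α → ℝ) (P P' : Finset (Finset α)) : Prop :=
  ∃ T ∈ P, ∃ D : Finset (Finset α), IsPartitionOf T D ∧ 2 ≤ D.card ∧
    v T < ∑ S ∈ D, v S ∧ P' = (P.erase T) ∪ D


lemma sum_frame_eq {α : Type*} [DecidableEq α] (v : Finset α → ℝ) (hv : v ∅ = 0)
    (P : Finset (Finset α)) (hP : (P : Set (Finset α)).PairwiseDisjoint id) (U : Finset α) :
    ∑ T ∈ (P.image (fun Pi => Pi ∩ U)).erase ∅, v T = ∑ Pi ∈ P, v (Pi ∩ U) := by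
  classical
  set Q := P.filter (fun Pi => Pi ∩ U ≠ ∅) with hQ
  have himg : (P.image (fun Pi => Pi ∩ U)).erase ∅ = Q.image (fun Pi => Pi ∩ U) := by
    ext T
    simp only [mem_erase, mem_image, hQ, mem_filter]
    constructor
    · rintro ⟨hne, Pi, hPi, rfl⟩; exact ⟨Pi, ⟨hPi, hne⟩, rfl⟩
    · rintro ⟨Pi, ⟨hPi, hne⟩, rfl⟩; exact ⟨hne, Pi, hPi, rfl⟩
  have hinj : ∀ x ∈ Q, ∀ y ∈ Q, x ∩ U = y ∩ U → x = y := by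
    intro x hx y hy hxy
    by_contra hne
    have hd := hP (mem_filter.1 hx).1 (mem_filter.1 hy).1 hne
    have hd2 : Disjoint (x ∩ U) (y ∩ U) := hd.mono inter_subset_left inter_subset_left
    rw [hxy, disjoint_self, Finset.bot_eq_empty] at hd2
    exact (mem_filter.1 hy).2 hd2
  rw [himg, Finset.sum_image hinj]
  refine Finset.sum_subset (filter_subset _ _) ?_
  intro Pi hPi hPiQ
  have h0 : Pi ∩ U = ∅ := by
    by_contra h
    exact hPiQ (mem_filter.2 ⟨hPi, h⟩)
  rw [h0, hv]

lemma sum_inter_eq_of_subset {α : Type*} [DecidableEq α] (v : Finset α → ℝ) (hv : v ∅ = 0)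
    (P : Finset (Finset α)) (hP : (P : Set (Finset α)).PairwiseDisjoint id)
    {Pi S : Finset α} (hPi : Pi ∈ P) (hS : S ⊆ Pi) :
    ∑ Pj ∈ P, v (Pj ∩ S) = v S := by
  rw [Finset.sum_eq_single_of_mem Pi hPi]
  · rw [inter_eq_right.2 hS]
  · intro Pj hPj hne
    have hd : Disjoint Pj Pi := hP hPj hPi hne
    rw [Finset.disjoint_iff_inter_eq_empty.1 (hd.mono_right hS), hv]

lemma sum_inter_le_sup {α : Type*} [DecidableEq α] (v : Finset α → ℝ) (hv : v ∅ = 0)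
    (Pi : Finset α)
    (hsuper : ∀ A B : Finset α, A ≠ ∅ → B ≠ ∅ → Disjoint A B → A ∪ B ⊆ Pi →
      v (A ∪ B) ≥ v A + v B)
    (C : Finset (Finset α)) (hC : (C : Set (Finset α)).PairwiseDisjoint id) :
    ∑ S ∈ C, v (Pi ∩ S) ≤ v (Pi ∩ C.sup id) := by
  classical
  induction C using Finset.induction_on with
  | empty => simp [hv]
  | @insert S C hSC ih =>
    rw [Finset.coe_insert] at hC
    have hC' := hC.subset (Set.subset_insert S _)
    have hdisj : Disjoint S (C.sup id) := by
      refine Finset.disjoint_sup_right.2 ?_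
      intro T hT
      exact hC (Set.mem_insert S _) (Set.mem_insert_of_mem _ hT) (fun h => hSC (h ▸ hT))
    have hsupins : Pi ∩ (insert S C).sup id = (Pi ∩ S) ∪ (Pi ∩ C.sup id) := by
      rw [Finset.sup_insert, id, Finset.sup_eq_union, Finset.inter_union_distrib_left]
    rw [Finset.sum_insert hSC, hsupins]
    by_cases h1 : Pi ∩ S = ∅
    · rw [h1, hv, empty_union, zero_add]
      exact ih hC'
    · by_cases h2 : Pi ∩ C.sup id = ∅
      · rw [h2, union_empty]
        have hz : ∑ T ∈ C, v (Pi ∩ T) = 0 := by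
          refine Finset.sum_eq_zero fun T hT => ?_
          have hsub : Pi ∩ T ⊆ Pi ∩ C.sup id :=
            inter_subset_inter (subset_refl _) (Finset.le_sup (f := id) hT)
          rw [h2] at hsub
          rw [Finset.subset_empty.1 hsub, hv]
        rw [hz, add_zero]
      · have hd : Disjoint (Pi ∩ S) (Pi ∩ C.sup id) :=
          hdisj.mono inter_subset_right inter_subset_right
        have hu : (Pi ∩ S) ∪ (Pi ∩ C.sup id) ⊆ Pi :=
          union_subset inter_subset_left inter_subset_left
        calc v (Pi ∩ S) + ∑ T ∈ C, v (Pi ∩ T)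
            ≤ v (Pi ∩ S) + v (Pi ∩ C.sup id) := by linarith [ih hC']
          _ ≤ v ((Pi ∩ S) ∪ (Pi ∩ C.sup id)) := hsuper _ _ h1 h2 hd hu

/-- Theorem 1: characterization of `D_c`-stable partitions. -/
theorem Dc_stable_characterization [Nonempty α] (v : Finset α → ℝ) (hv : v ∅ = 0)
    (P : Finset (Finset α)) (hP : IsPartition P) :
    DcStable v P ↔
      ((∀ Pi ∈ P, ∀ A B : Finset α, A ≠ ∅ → B ≠ ∅ → Disjoint A B → A ∪ B ⊆ Pi →
          v (A ∪ B) ≥ v A + v B) ∧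
       (∀ T : Finset α, T ≠ ∅ → (∀ Pi ∈ P, ¬ T ⊆ Pi) →
          ∑ Pi ∈ P, v (Pi ∩ T) ≥ v T)) := by

  constructor
  · intro hDc
    constructor
    · intro Pi hPi A B hA hB hAB hsub
      have hABne : A ≠ B := by
        rintro rfl
        exact hA (by simpa using disjoint_self.1 hAB)
      have hcol : IsCollection ({A, B} : Finset (Finset α)) := by
        constructor
        · intro S hS
          rcases Finset.mem_insert.1 hS with rfl | hS
          · exact hA
          · rw [Finset.mem_singleton.1 hS]; exact hB
        · intro x hx y hy hne
          simp only [Finset.coe_insert, Finset.coe_singleton, Set.mem_insert_iff,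
            Set.mem_singleton_iff] at hx hy
          rcases hx with rfl | rfl <;> rcases hy with rfl | rfl
          · exact absurd rfl hne
          · exact hAB
          · exact hAB.symm
          · exact absurd rfl hne
      have hsup : ({A, B} : Finset (Finset α)).sup id = A ∪ B := by
        simp [Finset.sup_insert, Finset.sup_singleton, Finset.sup_eq_union]
      have h := hDc {A, B} hcol
      unfold sw frame at h
      rw [hsup, sum_frame_eq v hv P hP.1.2 (A ∪ B),
        sum_inter_eq_of_subset v hv P hP.1.2 hPi hsub,
        Finset.sum_pair hABne] at h
      exact h
    · intro T hT hincomp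
      have hcol : IsCollection ({T} : Finset (Finset α)) := by
        constructor
        · intro S hS; rw [Finset.mem_singleton.1 hS]; exact hT
        · simp
      have h := hDc {T} hcol
      unfold sw frame at h
      rw [Finset.sup_singleton, id, sum_frame_eq v hv P hP.1.2 T,
        Finset.sum_singleton] at h
      exact h
  · rintro ⟨h1, h2⟩ C hC
    unfold sw frame
    rw [sum_frame_eq v hv P hP.1.2 (C.sup id)]
    have step1 : ∑ S ∈ C, v S ≤ ∑ S ∈ C, ∑ Pi ∈ P, v (Pi ∩ S) := by
      refine Finset.sum_le_sum fun S hS => ?_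
      by_cases hcomp : ∃ Pi ∈ P, S ⊆ Pi
      · obtain ⟨Pi, hPi, hsub⟩ := hcomp
        exact le_of_eq (sum_inter_eq_of_subset v hv P hP.1.2 hPi hsub).symm
      · push_neg at hcomp
        exact h2 S (hC.1 S hS) hcomp
    have step2 : ∑ Pi ∈ P, ∑ S ∈ C, v (Pi ∩ S) ≤ ∑ Pi ∈ P, v (Pi ∩ C.sup id) :=
      Finset.sum_le_sum fun Pi hPi =>
        sum_inter_le_sup v hv Pi (fun A B => h1 Pi hPi A B) C hC.2
    rw [Finset.sum_comm] at step1
    linarith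
end

section
/- A coalitional TU-game (v, N) is additive if and only if every partition of N is D_c-stable. -/
open Finset

variable {α : Type*} [DecidableEq α] [Fintype α]

lemma v_singleton_sum (v : Finset α → ℝ) (hv : v ∅ = 0)
    (hadd : ∀ A B : Finset α, A ≠ ∅ → B ≠ ∅ → Disjoint A B → v A + v B = v (A ∪ B))
    (S : Finset α) : v S = ∑ x ∈ S, v {x} := by
  induction S using Finset.induction with
  | empty => simp [hv]
  | @insert x S hx ih =>
    rcases eq_or_ne S ∅ with h | h
    · subst h; simp
    · rw [Finset.sum_insert hx, ← ih,
        hadd {x} S (by simp) h (by simp [Finset.disjoint_singleton_left, hx])]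
      rw [Finset.insert_eq]

lemma sw_collection (v : Finset α → ℝ) (hv : v ∅ = 0)
    (hadd : ∀ A B : Finset α, A ≠ ∅ → B ≠ ∅ → Disjoint A B → v A + v B = v (A ∪ B))
    (C : Finset (Finset α)) (hC : IsCollection C) :
    sw v C = ∑ x ∈ C.sup id, v {x} := by
  rw [Finset.sup_eq_biUnion, sw, Finset.sum_biUnion hC.2]
  exact Finset.sum_congr rfl fun S _ => v_singleton_sum v hv hadd S

lemma frame_sup (C P : Finset (Finset α)) (hP : IsPartition P) :
    (frame C P).sup id = C.sup id := by
  unfold frame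
  rw [← Finset.bot_eq_empty, Finset.sup_erase_bot, Finset.sup_image]
  have : P.sup (id ∘ (fun Pi => Pi ∩ C.sup id)) = P.sup (fun Pi => id Pi ⊓ C.sup id) := rfl
  rw [this, ← Finset.sup_inf_distrib_right, hP.2]
  exact Finset.univ_inter _

lemma frame_isCollection (C P : Finset (Finset α)) (hP : IsPartition P) :
    IsCollection (frame C P) := by
  constructor
  · intro S hS; exact Finset.ne_of_mem_erase hS
  · intro S hS T hT hne
    obtain ⟨Pi, hPi, rfl⟩ := Finset.mem_image.1 (Finset.mem_of_mem_erase hS)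
    obtain ⟨Pj, hPj, rfl⟩ := Finset.mem_image.1 (Finset.mem_of_mem_erase hT)
    have hij : Pi ≠ Pj := by rintro rfl; exact hne rfl
    have := hP.1.2 hPi hPj hij
    change Disjoint Pi Pj at this; change Disjoint (Pi ∩ C.sup id) (Pj ∩ C.sup id)
    exact (this.mono Finset.inter_subset_left Finset.inter_subset_left)

lemma extend_partition (C : Finset (Finset α)) (hC : IsCollection C) :
    IsPartition (C ∪ ((Finset.univ \ C.sup id).image fun x => ({x} : Finset α))) := by
  refine ⟨⟨?_, ?_⟩, ?_⟩
  · intro S hS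
    rcases Finset.mem_union.1 hS with h | h
    · exact hC.1 S h
    · obtain ⟨x, _, rfl⟩ := Finset.mem_image.1 h
      simp
  · intro S hS T hT hne
    have hsub : ∀ S ∈ C, S ⊆ C.sup id := fun S h => Finset.le_sup (f := id) h
    have hsing : ∀ T ∈ (Finset.univ \ C.sup id).image (fun x => ({x} : Finset α)),
        ∀ S ∈ C, Disjoint T S := by
      intro T hT S hS
      obtain ⟨x, hx, rfl⟩ := Finset.mem_image.1 hT
      have hxU : x ∉ C.sup id := (Finset.mem_sdiff.1 hx).2
      rw [Finset.disjoint_singleton_left]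
      exact fun hmem => hxU (hsub S hS hmem)
    rcases Finset.mem_union.1 hS with h1 | h1 <;> rcases Finset.mem_union.1 hT with h2 | h2
    · exact hC.2 h1 h2 hne
    · exact (hsing T h2 S h1).symm
    · exact hsing S h1 T h2
    · obtain ⟨x, hx, rfl⟩ := Finset.mem_image.1 h1
      obtain ⟨y, hy, rfl⟩ := Finset.mem_image.1 h2
      have : x ≠ y := by rintro rfl; exact hne rfl
      exact Finset.disjoint_singleton.2 this
  · rw [Finset.sup_union, Finset.sup_image]
    have : (Finset.univ \ C.sup id).sup (id ∘ fun x => ({x} : Finset α))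
        = Finset.univ \ C.sup id := by
      rw [Finset.sup_eq_biUnion]
      exact Finset.biUnion_singleton_eq_self
    rw [this]
    rw [Finset.sup_eq_union]
    exact Finset.union_sdiff_of_subset (Finset.subset_univ _)

lemma frame_extend (U : Finset α) (C D : Finset (Finset α)) (hCsup : C.sup id = U)
    (hD : ∀ T ∈ D, T ≠ ∅) (hDsub : ∀ T ∈ D, T ⊆ U) :
    frame C (D ∪ ((Finset.univ \ U).image fun x => ({x} : Finset α))) = D := by
  unfold frame
  rw [hCsup]
  ext S
  simp only [Finset.mem_erase, Finset.mem_image, Finset.mem_union]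
  constructor
  · rintro ⟨hSne, T, hT | ⟨x, hx, rfl⟩, rfl⟩
    · rwa [Finset.inter_eq_left.2 (hDsub T hT)]
    · exact absurd (Finset.singleton_inter_of_notMem (Finset.mem_sdiff.1 hx).2) hSne
  · intro hS
    exact ⟨hD S hS, S, Or.inl hS, Finset.inter_eq_left.2 (hDsub S hS)⟩

/-- Theorem 2: a game is additive iff every partition is `D_c`-stable. -/
theorem additive_iff_all_Dc_stable [Nonempty α] (v : Finset α → ℝ) (hv : v ∅ = 0) :
    (∀ A B : Finset α, A ≠ ∅ → B ≠ ∅ → Disjoint A B → v A + v B = v (A ∪ B)) ↔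
      (∀ P : Finset (Finset α), IsPartition P → DcStable v P) := by
  constructor
  · intro hadd P hP C hC
    rw [sw_collection v hv hadd C hC,
      sw_collection v hv hadd _ (frame_isCollection C P hP), frame_sup C P hP]
  · intro hstab A B hA hB hAB
    set U := A ∪ B with hU
    have hABne : A ≠ B := by
      rintro rfl
      exact hA (Finset.bot_eq_empty ▸ disjoint_self.1 hAB)
    have hUne : U ≠ ∅ := by
      intro h
      rw [hU, Finset.union_eq_empty] at h
      exact hA h.1
    -- collection {A, B}
    have hcollAB : IsCollection ({A, B} : Finset (Finset α)) := by
      constructor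
      · intro S hS
        rcases Finset.mem_insert.1 hS with rfl | hS
        · exact hA
        · rw [Finset.mem_singleton.1 hS]; exact hB
      · intro S hS T hT hne
        simp only [Finset.coe_insert, Finset.coe_singleton, Set.mem_insert_iff,
          Set.mem_singleton_iff] at hS hT
        rcases hS with rfl | rfl <;> rcases hT with rfl | rfl
        · exact absurd rfl hne
        · exact hAB
        · exact hAB.symm
        · exact absurd rfl hne
    have hsupAB : ({A, B} : Finset (Finset α)).sup id = U := by
      simp [hU]
    -- collection {U}
    have hcollU : IsCollection ({U} : Finset (Finset α)) := by
      constructor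
      · intro S hS; rw [Finset.mem_singleton.1 hS]; exact hUne
      · rw [Finset.coe_singleton]
        exact Set.pairwiseDisjoint_singleton _ _
    have hsupU : ({U} : Finset (Finset α)).sup id = U := by simp
    -- Partition P1 = {U} ∪ singletons of complement
    have hP1 := extend_partition {U} hcollU
    rw [hsupU] at hP1
    have h1 := hstab _ hP1 {A, B} hcollAB
    have hf1 : frame {A, B} ({U} ∪ ((Finset.univ \ U).image fun x => ({x} : Finset α)))
        = {U} := by
      apply frame_extend U {A, B} {U} hsupAB
      · intro T hT; rw [Finset.mem_singleton.1 hT]; exact hUne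
      · intro T hT; rw [Finset.mem_singleton.1 hT]
    rw [hf1] at h1
    -- Partition P2 = {A, B} ∪ singletons of complement
    have hP2 := extend_partition {A, B} hcollAB
    rw [hsupAB] at hP2
    have h2 := hstab _ hP2 {U} hcollU
    have hf2 : frame {U} ({A, B} ∪ ((Finset.univ \ U).image fun x => ({x} : Finset α)))
        = {A, B} := by
      apply frame_extend U {U} {A, B} hsupU hcollAB.1
      intro T hT
      rcases Finset.mem_insert.1 hT with rfl | hT
      · exact Finset.subset_union_left
      · rw [Finset.mem_singleton.1 hT]; exact Finset.subset_union_right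
    rw [hf2] at h2
    have hswAB : sw v {A, B} = v A + v B := by
      rw [sw, Finset.sum_pair hABne]
    have hswU : sw v ({U} : Finset (Finset α)) = v U := by simp [sw]
    rw [hswAB, hswU] at h1 h2
    linarith
end

section
/- If P is a D_c-stable partition of N, then sw(P) = max_Q sw(Q), where the maximum is taken over all partitions Q of N. -/
open Finset

variable {α : Type*} [DecidableEq α] [Fintype α]

/-- Note 1: a `D_c`-stable partition maximizes social welfare among all partitions. -/
theorem Dc_stable_maximizes_sw [Nonempty α] (v : Finset α → ℝ) (hv : v ∅ = 0)
    (P : Finset (Finset α)) (hP : IsPartition P) (hstable : DcStable v P) :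
    IsGreatest {x : ℝ | ∃ Q : Finset (Finset α), IsPartition Q ∧ sw v Q = x} (sw v P) := by
  constructor
  · exact ⟨P, hP, rfl⟩
  · rintro x ⟨Q, hQ, rfl⟩
    have key : frame Q P = P := by
      unfold frame
      rw [hQ.2]
      have : P.image (fun Pi => Pi ∩ Finset.univ) = P := by
        rw [Finset.image_congr (g := id) (fun x _ => Finset.inter_univ x)]
        exact Finset.image_id
      rw [this]
      exact Finset.erase_eq_of_notMem (fun h => hP.1.1 ∅ h rfl)
    have := hstable Q hQ.1
    rw [key] at this
    exact this
end

section
/- The one-element partition P = {N} is D_c-stable if and only if the game (v, N) is superadditive. Moreover, if (v, N) is strictly superadditive, then {N} is the unique D_c-stable partition of N. -/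
open Finset

variable {α : Type*} [DecidableEq α] [Fintype α]

lemma sw_le_sup_aux (v : Finset α → ℝ)
    (hsa : ∀ A B : Finset α, A ≠ ∅ → B ≠ ∅ → Disjoint A B → v A + v B ≤ v (A ∪ B)) :
    ∀ C : Finset (Finset α), IsCollection C → C.Nonempty → sw v C ≤ v (C.sup id) := by
  intro C
  induction C using Finset.cons_induction with
  | empty => intro _ h; simp at h
  | cons S C' hS ih =>
    intro hC _
    obtain ⟨hne, hdisj⟩ := hC
    rcases C'.eq_empty_or_nonempty with rfl | hC'
    · simp [sw]
    · have hcol' : IsCollection C' := by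
        refine ⟨fun T hT => hne T (mem_cons_of_mem hT), hdisj.subset ?_⟩
        intro x hx
        simp only [Finset.mem_coe] at hx ⊢
        exact mem_cons_of_mem hx
      have h1 := ih hcol' hC'
      have hSd : Disjoint S (C'.sup id) := by
        apply Finset.disjoint_sup_right.2
        intro T hT
        exact hdisj (by simp) (by simp [hT]) (by rintro rfl; exact hS hT)
      have hSne : S ≠ ∅ := hne S (mem_cons_self _ _)
      have hsupne : C'.sup id ≠ ∅ := by
        obtain ⟨T, hT⟩ := hC'
        intro h
        have hsub : T ⊆ C'.sup id := le_sup (f := id) hT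
        rw [h] at hsub
        exact hne T (mem_cons_of_mem hT) (subset_empty.1 hsub)
      have hsw : sw v (cons S C' hS) = v S + sw v C' := by
        rw [sw, sw, Finset.sum_cons]
      rw [hsw]
      calc v S + sw v C' ≤ v S + v (C'.sup id) := by linarith
        _ ≤ v (S ∪ C'.sup id) := hsa _ _ hSne hsupne hSd
        _ = v ((cons S C' hS).sup id) := by
            rw [sup_cons]; rfl

lemma sw_lt_sup_aux (v : Finset α → ℝ)
    (hss : ∀ A B : Finset α, A ≠ ∅ → B ≠ ∅ → Disjoint A B → v A + v B < v (A ∪ B)) :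
    ∀ C : Finset (Finset α), IsCollection C → 2 ≤ C.card → sw v C < v (C.sup id) := by
  intro C hC h2
  have hsa : ∀ A B : Finset α, A ≠ ∅ → B ≠ ∅ → Disjoint A B → v A + v B ≤ v (A ∪ B) :=
    fun A B hA hB hAB => le_of_lt (hss A B hA hB hAB)
  obtain ⟨hne, hdisj⟩ := hC
  obtain ⟨S, hS⟩ := Finset.card_pos.1 (by omega : 0 < C.card)
  set C' := C.erase S with hC'def
  have hcard : C'.card = C.card - 1 := Finset.card_erase_of_mem hS
  have hC'ne : C'.Nonempty := Finset.card_pos.1 (by omega)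
  have hcol' : IsCollection C' := by
    refine ⟨fun T hT => hne T (Finset.mem_of_mem_erase hT), hdisj.subset ?_⟩
    intro x hx
    simp only [Finset.mem_coe] at hx ⊢
    exact Finset.mem_of_mem_erase hx
  have h1 := sw_le_sup_aux v hsa C' hcol' hC'ne
  have hSd : Disjoint S (C'.sup id) := by
    apply Finset.disjoint_sup_right.2
    intro T hT
    exact hdisj (by simp [hS]) (by simp [Finset.mem_of_mem_erase hT])
      (fun h => (Finset.ne_of_mem_erase hT) h.symm)
  have hSne : S ≠ ∅ := hne S hS
  have hsupne : C'.sup id ≠ ∅ := by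
    obtain ⟨T, hT⟩ := hC'ne
    intro h
    have hsub : T ⊆ C'.sup id := le_sup (f := id) hT
    rw [h] at hsub
    exact hne T (Finset.mem_of_mem_erase hT) (subset_empty.1 hsub)
  have hins : C = insert S C' := (Finset.insert_erase hS).symm
  have hsw : sw v C = v S + sw v C' := by
    rw [hins, sw, sw, Finset.sum_insert (Finset.notMem_erase _ _)]
  have hsup : C.sup id = S ∪ C'.sup id := by
    conv_lhs => rw [hins]
    rw [Finset.sup_insert]; rfl
  rw [hsw, hsup]
  calc v S + sw v C' ≤ v S + v (C'.sup id) := by linarith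
    _ < v (S ∪ C'.sup id) := hss _ _ hSne hsupne hSd

lemma frame_univ_eq (C : Finset (Finset α)) (hCne : C.Nonempty)
    (hC : IsCollection C) :
    frame C ({Finset.univ} : Finset (Finset α)) = {C.sup id} := by
  have hsupne : C.sup id ≠ ∅ := by
    obtain ⟨T, hT⟩ := hCne
    intro h
    have hsub : T ⊆ C.sup id := le_sup (f := id) hT
    rw [h] at hsub
    exact hC.1 T hT (subset_empty.1 hsub)
  simp [frame, Finset.univ_inter, Finset.erase_eq_of_notMem, hsupne.symm,
    Finset.mem_singleton]

/-- Corollary: `{N}` is `D_c`-stable iff the game is superadditive; if the game is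
strictly superadditive, then `{N}` is the unique `D_c`-stable partition. -/
theorem grand_coalition_Dc_stable [Nonempty α] (v : Finset α → ℝ) (hv : v ∅ = 0) :
    (DcStable v ({Finset.univ} : Finset (Finset α)) ↔
      ∀ A B : Finset α, A ≠ ∅ → B ≠ ∅ → Disjoint A B → v A + v B ≤ v (A ∪ B)) ∧
    ((∀ A B : Finset α, A ≠ ∅ → B ≠ ∅ → Disjoint A B → v A + v B < v (A ∪ B)) →
      DcStable v ({Finset.univ} : Finset (Finset α)) ∧
      ∀ P : Finset (Finset α), IsPartition P → DcStable v P →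
        P = ({Finset.univ} : Finset (Finset α))) := by
  have main : ∀ (hsa : ∀ A B : Finset α, A ≠ ∅ → B ≠ ∅ → Disjoint A B → v A + v B ≤ v (A ∪ B)),
      DcStable v ({Finset.univ} : Finset (Finset α)) := by
    intro hsa C hC
    rcases C.eq_empty_or_nonempty with rfl | hCne
    · simp [frame, sw, hv]
    · rw [frame_univ_eq C hCne hC]
      have := sw_le_sup_aux v hsa C hC hCne
      simpa [sw] using this
  constructor
  · constructor
    · intro h A B hA hB hAB
      have hABne : A ≠ B := by
        rintro rfl
        exact hA (by simpa using hAB)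
      have hcol : IsCollection ({A, B} : Finset (Finset α)) := by
        constructor
        · intro S hS
          rcases Finset.mem_insert.1 hS with rfl | hS
          · exact hA
          · rw [Finset.mem_singleton.1 hS]; exact hB
        · intro x hx y hy hxy
          simp only [Finset.coe_insert, Finset.coe_singleton, Set.mem_insert_iff,
            Set.mem_singleton_iff] at hx hy
          rcases hx with rfl | rfl <;> rcases hy with rfl | rfl <;>
            first
            | exact absurd rfl hxy
            | simpa [id, Function.onFun] using hAB
            | simpa [id, Function.onFun] using hAB.symm
      have hne2 : ({A, B} : Finset (Finset α)).Nonempty := ⟨A, by simp⟩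
      have hf := h _ hcol
      rw [frame_univ_eq _ hne2 hcol] at hf
      have hsup : ({A, B} : Finset (Finset α)).sup id = A ∪ B := by
        simp [Finset.sup_insert, Finset.sup_singleton]
      have hsw2 : sw v ({A, B} : Finset (Finset α)) = v A + v B := by
        rw [sw, Finset.sum_pair hABne]
      have hsw1 : sw v ({A ∪ B} : Finset (Finset α)) = v (A ∪ B) := by simp [sw]
      rw [hsup, hsw1, hsw2] at hf
      exact hf
    · exact main
  · intro hss
    have hsa : ∀ A B : Finset α, A ≠ ∅ → B ≠ ∅ → Disjoint A B → v A + v B ≤ v (A ∪ B) :=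
      fun A B hA hB hAB => le_of_lt (hss A B hA hB hAB)
    refine ⟨main hsa, ?_⟩
    intro P hP hPdc
    obtain ⟨⟨hPne, hPdisj⟩, hPsup⟩ := hP
    have huniv_ne : (Finset.univ : Finset α) ≠ ∅ := Finset.univ_nonempty.ne_empty
    have hPnonempty : P.Nonempty := by
      rcases P.eq_empty_or_nonempty with rfl | h
      · simp at hPsup; exact absurd hPsup.symm huniv_ne
      · exact h
    rcases Nat.lt_or_ge P.card 2 with hcard | hcard
    · have h1 : P.card = 1 := by
        have := Finset.card_pos.2 hPnonempty; omega
      obtain ⟨T, hT⟩ := Finset.card_eq_one.1 h1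
      subst hT
      simp only [Finset.sup_singleton] at hPsup
      rw [show (id T : Finset α) = T from rfl] at hPsup
      rw [hPsup]
    · exfalso
      have hcolU : IsCollection ({Finset.univ} : Finset (Finset α)) := by
        constructor
        · intro S hS; rw [Finset.mem_singleton.1 hS]; exact huniv_ne
        · simp [Set.PairwiseDisjoint, Set.Pairwise]
      have hf := hPdc _ hcolU
      have hframe : frame ({Finset.univ} : Finset (Finset α)) P = P := by
        have hsupU : ({Finset.univ} : Finset (Finset α)).sup id = Finset.univ := by
          simp
        have himg : P.image (fun Pi => Pi ∩ ({Finset.univ} : Finset (Finset α)).sup id) = P := by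
          rw [hsupU]
          simp [Finset.inter_univ]
        rw [frame, himg, Finset.erase_eq_of_notMem]
        intro h
        exact hPne ∅ h rfl
      rw [hframe] at hf
      have hlt := sw_lt_sup_aux v hss P ⟨hPne, hPdisj⟩ hcard
      rw [hPsup] at hlt
      have hswU : sw v ({Finset.univ} : Finset (Finset α)) = v Finset.univ := by
        simp [sw]
      rw [hswU] at hf
      linarith
end

section
/- The partition P = {{1}, {2}, …, {n}} of N into singletons is D_c-stable if and only if the inequality ∑_{i ∈ T} v({i}) ≥ v(T) holds for all coalitions T ⊆ N. Moreover, if all these inequalities are strict (for all coalitions T with at least two elements), then P is the unique D_c-stable partition of N. -/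
open Finset

variable {α : Type*} [DecidableEq α] [Fintype α]

set_option linter.unusedSectionVars false

lemma frame_singletons (C : Finset (Finset α)) :
    frame C (Finset.univ.image (fun i : α => ({i} : Finset α))) =
      (C.sup id).image (fun i => ({i} : Finset α)) := by
  ext S
  simp only [frame, mem_erase, mem_image, image_image, Function.comp]
  constructor
  · rintro ⟨hS, i, -, rfl⟩
    by_cases hi : i ∈ C.sup id
    · exact ⟨i, hi, by rw [Finset.singleton_inter_of_mem hi]⟩
    · exact absurd (Finset.singleton_inter_of_notMem hi) hS
  · rintro ⟨i, hi, rfl⟩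
    exact ⟨singleton_ne_empty i, i, mem_univ i, Finset.singleton_inter_of_mem hi⟩

lemma sum_singletons (v : Finset α → ℝ) (U : Finset α) :
    ∑ S ∈ U.image (fun i => ({i} : Finset α)), v S = ∑ i ∈ U, v {i} :=
  Finset.sum_image (by simp)

lemma sw_frame_singletons (v : Finset α → ℝ) (C : Finset (Finset α)) :
    sw v (frame C (Finset.univ.image (fun i : α => ({i} : Finset α)))) =
      ∑ i ∈ C.sup id, v {i} := by
  rw [frame_singletons, sw, sum_singletons]

lemma sum_over_sup (v : Finset α → ℝ) (C : Finset (Finset α))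
    (hC : (C : Set (Finset α)).PairwiseDisjoint id) :
    ∑ i ∈ C.sup id, v {i} = ∑ S ∈ C, ∑ i ∈ S, v {i} := by
  rw [Finset.sup_eq_biUnion, Finset.sum_biUnion hC]; rfl


/-- Corollary: the partition into singletons is `D_c`-stable iff
`∑_{i ∈ T} v({i}) ≥ v(T)` for all coalitions `T`; if all these inequalities are strict
(for `|T| ≥ 2`), then it is the unique `D_c`-stable partition. -/
theorem singletons_Dc_stable [Nonempty α] (v : Finset α → ℝ) (hv : v ∅ = 0) :
    (DcStable v (Finset.univ.image (fun i : α => ({i} : Finset α))) ↔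
      ∀ T : Finset α, T ≠ ∅ → ∑ i ∈ T, v {i} ≥ v T) ∧
    ((∀ T : Finset α, 2 ≤ T.card → ∑ i ∈ T, v {i} > v T) →
      DcStable v (Finset.univ.image (fun i : α => ({i} : Finset α))) ∧
      ∀ P : Finset (Finset α), IsPartition P → DcStable v P →
        P = Finset.univ.image (fun i : α => ({i} : Finset α))) := by
  set P0 := Finset.univ.image (fun i : α => ({i} : Finset α)) with hP0
  have key : (∀ T : Finset α, T ≠ ∅ → ∑ i ∈ T, v {i} ≥ v T) → DcStable v P0 := by
    intro h C hC
    rw [sw_frame_singletons, sum_over_sup v C hC.2]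
    exact Finset.sum_le_sum (fun S hS => h S (hC.1 S hS))
  have fwd : DcStable v P0 → ∀ T : Finset α, T ≠ ∅ → ∑ i ∈ T, v {i} ≥ v T := by
    intro h T hT
    have hcoll : IsCollection ({T} : Finset (Finset α)) := by
      constructor
      · simpa using hT
      · simp [Set.PairwiseDisjoint]
    have := h {T} hcoll
    rw [sw_frame_singletons] at this
    simpa [sw] using this
  refine ⟨⟨fwd, key⟩, fun hstrict => ?_⟩
  have hweak : ∀ T : Finset α, T ≠ ∅ → ∑ i ∈ T, v {i} ≥ v T := by
    intro T hT
    have h1 : 1 ≤ T.card := Finset.card_pos.mpr (Finset.nonempty_of_ne_empty hT)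
    rcases eq_or_lt_of_le h1 with h | h
    · obtain ⟨a, rfl⟩ := Finset.card_eq_one.mp h.symm
      simp
    · exact le_of_lt (hstrict T h)
  refine ⟨key hweak, fun P hP hPd => ?_⟩
  by_contra hne
  -- find a block T of P with 2 ≤ T.card
  have hbig : ∃ T ∈ P, 2 ≤ T.card := by
    by_contra hall
    push_neg at hall
    apply hne
    have hone : ∀ T ∈ P, T.card = 1 := by
      intro T hT
      have h1 : 1 ≤ T.card := Finset.card_pos.mpr (Finset.nonempty_of_ne_empty (hP.1.1 T hT))
      have := hall T hT
      omega
    ext S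
    simp only [hP0, mem_image]
    constructor
    · intro hS
      obtain ⟨i, hi⟩ := Finset.card_eq_one.mp (hone S hS)
      exact ⟨i, mem_univ i, hi.symm⟩
    · rintro ⟨i, -, rfl⟩
      have hi : i ∈ P.sup id := by rw [hP.2]; exact mem_univ i
      rw [Finset.mem_sup] at hi
      obtain ⟨S, hS, hiS⟩ := hi
      obtain ⟨j, rfl⟩ := Finset.card_eq_one.mp (hone S hS)
      simp only [id, Finset.mem_singleton] at hiS
      subst hiS; exact hS
  obtain ⟨T, hTP, hTcard⟩ := hbig
  -- collection of singletons of T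
  set C := T.image (fun i => ({i} : Finset α)) with hCdef
  have hCsup : C.sup id = T := by
    ext x; simp [hCdef]
  have hCcoll : IsCollection C := by
    constructor
    · intro S hS
      simp only [hCdef, mem_image] at hS
      obtain ⟨i, -, rfl⟩ := hS
      exact singleton_ne_empty i
    · intro S hS S' hS' hne'
      simp only [hCdef, coe_image, Set.mem_image] at hS hS'
      obtain ⟨i, -, rfl⟩ := hS
      obtain ⟨j, -, rfl⟩ := hS'
      simp only [Function.onFun, id_eq, Finset.disjoint_singleton]
      intro h; exact hne' (by rw [h])
  have hframe : frame C P = {T} := by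
    ext S
    simp only [frame, mem_erase, mem_image, hCsup, mem_singleton]
    constructor
    · rintro ⟨hS, Pi, hPi, rfl⟩
      rcases eq_or_ne Pi T with h | hne'
      · rw [h]; exact Finset.inter_self T
      · exact absurd (Finset.disjoint_iff_inter_eq_empty.mp
          (hP.1.2 hPi hTP hne')) hS
    · rintro rfl
      exact ⟨hP.1.1 _ hTP, _, hTP, Finset.inter_self _⟩
  have := hPd C hCcoll
  rw [hframe] at this
  have hswC : sw v C = ∑ i ∈ T, v {i} := sum_singletons v T
  have hswF : sw v ({T} : Finset (Finset α)) = v T := by simp [sw]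
  rw [hswF, hswC] at this
  exact absurd this (not_le.mpr (hstrict T hTcard))
end

section
/- Every iteration of the merge and split rules terminates: there is no infinite sequence P_0, P_1, P_2, … of partitions of N in which each P_{m+1} is obtained from P_m by an application of the merge rule or the split rule. -/
open Finset

variable {α : Type*} [DecidableEq α] [Fintype α]

lemma sw_lt_of_merge {α : Type*} [DecidableEq α] [Fintype α] (v : Finset α → ℝ)
    {P P' : Finset (Finset α)} (hP : IsPartition P)
    (h : MergeStep v P P') : sw v P < sw v P' := by
  obtain ⟨T, hTP, hcard, hlt, rfl⟩ := h
  obtain ⟨⟨hne, hdisj⟩, -⟩ := hP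
  obtain ⟨T₁, hT₁, T₂, hT₂, hne12⟩ := Finset.one_lt_card.mp hcard
  have hsub1 : T₁ ⊆ T.sup id := Finset.le_sup (f := id) hT₁
  have hsub2 : T₂ ⊆ T.sup id := Finset.le_sup (f := id) hT₂
  have hU : T.sup id ∉ P \ T := by
    intro hmem
    rw [Finset.mem_sdiff] at hmem
    have hUne : T.sup id ≠ T₁ := fun hh => hmem.2 (hh ▸ hT₁)
    have hd := hdisj hmem.1 (hTP hT₁) hUne
    obtain ⟨x, hx⟩ := Finset.nonempty_iff_ne_empty.mpr (hne _ (hTP hT₁))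
    exact Finset.disjoint_left.mp hd (hsub1 hx) hx
  rw [sw, sw, Finset.sum_insert hU, ← Finset.sum_sdiff hTP (f := v)]
  linarith

lemma sw_lt_of_split {α : Type*} [DecidableEq α] [Fintype α] (v : Finset α → ℝ)
    {P P' : Finset (Finset α)} (hP : IsPartition P)
    (h : SplitStep v P P') : sw v P < sw v P' := by
  obtain ⟨T, hT, D, ⟨⟨hDne, hDdisj⟩, hDsup⟩, hcard, hlt, rfl⟩ := h
  obtain ⟨⟨hne, hdisj⟩, -⟩ := hP
  have hdis : Disjoint (P.erase T) D := by
    rw [Finset.disjoint_left]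
    intro x hx hxD
    have hxP := Finset.mem_of_mem_erase hx
    have hxT : x ≠ T := Finset.ne_of_mem_erase hx
    have hsub : x ⊆ T := hDsup ▸ Finset.le_sup (f := id) hxD
    obtain ⟨a, ha⟩ := Finset.nonempty_iff_ne_empty.mpr (hne _ hxP)
    exact Finset.disjoint_left.mp (hdisj hxP hT hxT) ha (hsub ha)
  rw [sw, sw, Finset.sum_union hdis, ← Finset.sum_erase_add P v hT]
  linarith

theorem merge_split_terminates' {α : Type*} [DecidableEq α] [Fintype α]
    (v : Finset α → ℝ) :
    ¬ ∃ f : ℕ → Finset (Finset α), (∀ n, IsPartition (f n)) ∧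
      ∀ n, MergeStep v (f n) (f (n + 1)) ∨ SplitStep v (f n) (f (n + 1)) := by
  rintro ⟨f, hpart, hstep⟩
  have hmono : StrictMono (fun n => sw v (f n)) := by
    apply strictMono_nat_of_lt_succ
    intro n
    rcases hstep n with h | h
    · exact sw_lt_of_merge v (hpart n) h
    · exact sw_lt_of_split v (hpart n) h
  have hinj : Function.Injective f := fun a b hab => hmono.injective (by simp [hab])
  obtain ⟨a, b, hab, heq⟩ := Finite.exists_ne_map_eq_of_infinite f
  exact hab (hinj heq)

/-- Note 2: every iteration of the merge and split rules terminates. -/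
theorem merge_split_terminates [Nonempty α] (v : Finset α → ℝ) (hv : v ∅ = 0) :
    ¬ ∃ f : ℕ → Finset (Finset α), (∀ n, IsPartition (f n)) ∧
      ∀ n, MergeStep v (f n) (f (n + 1)) ∨ SplitStep v (f n) (f (n + 1)) := by
  exact merge_split_terminates' v
end

section
/- Every D_c-stable partition of N is closed under the applications of the merge and split rules, i.e., neither the merge rule nor the split rule can be applied to it. -/
open Finset

variable {α : Type*} [DecidableEq α] [Fintype α]

/-- Note 3: every `D_c`-stable partition is closed under the merge and split rules. -/
theorem Dc_stable_closed [Nonempty α] (v : Finset α → ℝ) (hv : v ∅ = 0)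
    (P : Finset (Finset α)) (hP : IsPartition P) (hstable : DcStable v P) :
    (¬ ∃ P' : Finset (Finset α), MergeStep v P P') ∧
    (¬ ∃ P' : Finset (Finset α), SplitStep v P P') := by
  obtain ⟨⟨hne, hdisj⟩, hsup⟩ := hP
  constructor
  · rintro ⟨P', T, hTP, hcard, hlt, -⟩
    set U := T.sup id with hU
    have hTne : T.Nonempty := Finset.card_pos.mp (by omega)
    obtain ⟨T0, hT0⟩ := hTne
    have hUne : U ≠ ∅ := by
      intro h
      have hsub : T0 ⊆ U := Finset.le_sup (f := id) hT0
      exact hne T0 (hTP hT0) (Finset.subset_empty.mp (h ▸ hsub))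
    have hC : IsCollection {U} := by
      refine ⟨by simp [hUne], ?_⟩
      simp [Set.PairwiseDisjoint, Set.Pairwise]
    have hframe : frame {U} P = T := by
      have hsupU : ({U} : Finset (Finset α)).sup id = U := by simp
      ext x
      simp only [frame, Finset.mem_erase, Finset.mem_image, hsupU]
      constructor
      · rintro ⟨hx0, Pi, hPi, rfl⟩
        by_cases h : Pi ∈ T
        · have hsub : Pi ⊆ U := Finset.le_sup (f := id) h
          rwa [Finset.inter_eq_left.mpr hsub]
        · exfalso
          have hd : Disjoint Pi U := by
            apply Finset.disjoint_sup_right.mpr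
            intro Tj hTj
            exact hdisj hPi (hTP hTj) (fun he => h (he ▸ hTj))
          exact hx0 (Finset.disjoint_iff_inter_eq_empty.mp hd)
      · intro hx
        have hxP := hTP hx
        have hsub : x ⊆ U := Finset.le_sup (f := id) hx
        exact ⟨hne x hxP, x, hxP, Finset.inter_eq_left.mpr hsub⟩
    have hst := hstable {U} hC
    rw [hframe] at hst
    simp only [sw, Finset.sum_singleton] at hst
    linarith
  · rintro ⟨P', T, hTpP, D, ⟨⟨hDne, hDdisj⟩, hDsup⟩, hcard, hlt, -⟩
    have hframe : frame D P = {T} := by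
      ext x
      simp only [frame, Finset.mem_erase, Finset.mem_image, Finset.mem_singleton, hDsup]
      constructor
      · rintro ⟨hx0, Pi, hPi, rfl⟩
        by_cases h : Pi = T
        · simp [h]
        · exfalso
          have hd : Disjoint Pi T := hdisj hPi hTpP h
          exact hx0 (Finset.disjoint_iff_inter_eq_empty.mp hd)
      · rintro rfl
        refine ⟨hne _ hTpP, _, hTpP, ?_⟩
        simp
    have hst := hstable D ⟨hDne, hDdisj⟩
    rw [hframe] at hst
    simp only [sw, Finset.sum_singleton] at hst
    linarith
end

section
/- Suppose a strictly D_c-stable partition P of N exists. Then every partition P' of N that is closed under the applications of the merge and split rules (i.e., neither rule can be applied to P') equals P. -/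
open Finset

variable {α : Type*} [DecidableEq α] [Fintype α]

omit [Fintype α] in
lemma pd_eq {P : Finset (Finset α)} (h : (P : Set (Finset α)).PairwiseDisjoint id)
    {S T : Finset α} (hS : S ∈ P) (hT : T ∈ P) {x : α} (hxS : x ∈ S) (hxT : x ∈ T) :
    S = T := by
  by_contra hne
  exact Finset.disjoint_left.mp (h (Finset.mem_coe.mpr hS) (Finset.mem_coe.mpr hT) hne) hxS hxT

lemma cover {P : Finset (Finset α)} (hP : IsPartition P) (x : α) : ∃ T ∈ P, x ∈ T := by
  have hx : x ∈ P.sup id := by rw [hP.2]; exact Finset.mem_univ x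
  simpa using Finset.mem_sup.mp hx

lemma stepA (v : Finset α → ℝ) (P P' : Finset (Finset α)) (hP : IsPartition P)
    (hstrict : StrictlyDcStable v P) (hP' : IsPartition P')
    (hsplit : ¬ ∃ Q : Finset (Finset α), SplitStep v P' Q) :
    ∀ T ∈ P', ∃ Pi ∈ P, T ⊆ Pi := by
  intro T hT
  by_contra hcon
  push_neg at hcon
  have hTne : T ≠ ∅ := hP'.1.1 T hT
  set F : Finset (Finset α) := (P.image (fun Pi => Pi ∩ T)).erase ∅ with hFdef
  have hframe : frame {T} P = F := by
    rw [hFdef]; simp [frame]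
  have hmemF : ∀ S ∈ F, S ≠ ∅ ∧ ∃ Pi ∈ P, Pi ∩ T = S := by
    intro S hS
    rcases Finset.mem_erase.mp hS with ⟨h1, h2⟩
    exact ⟨h1, Finset.mem_image.mp h2⟩
  have hFdisj : (F : Set (Finset α)).PairwiseDisjoint id := by
    intro S1 hS1 S2 hS2 hne
    obtain ⟨_, Pi, hPi, hPiS⟩ := hmemF S1 (Finset.mem_coe.mp hS1)
    obtain ⟨_, Pj, hPj, hPjS⟩ := hmemF S2 (Finset.mem_coe.mp hS2)
    have hPij : Pi ≠ Pj := by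
      rintro rfl; exact hne (hPiS ▸ hPjS ▸ rfl)
    have hd : Disjoint Pi Pj := hP.1.2 (Finset.mem_coe.mpr hPi) (Finset.mem_coe.mpr hPj) hPij
    show Disjoint S1 S2
    rw [← hPiS, ← hPjS]
    exact Finset.disjoint_left.mpr fun a ha1 ha2 =>
      Finset.disjoint_left.mp hd (Finset.mem_inter.mp ha1).1 (Finset.mem_inter.mp ha2).1
  have hFsup : F.sup id = T := by
    apply Finset.Subset.antisymm
    · intro x hx
      obtain ⟨S, hS, hxS⟩ := Finset.mem_sup.mp hx
      obtain ⟨_, Pi, _, hPiS⟩ := hmemF S hS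
      rw [← hPiS] at hxS
      exact (Finset.mem_inter.mp hxS).2
    · intro x hx
      obtain ⟨Pi, hPi, hxPi⟩ := cover hP x
      have hne : Pi ∩ T ≠ ∅ := by
        apply Finset.ne_empty_of_mem (a := x); exact Finset.mem_inter.mpr ⟨hxPi, hx⟩
      have hmem : Pi ∩ T ∈ F :=
        Finset.mem_erase.mpr ⟨hne, Finset.mem_image.mpr ⟨Pi, hPi, rfl⟩⟩
      exact Finset.le_sup (f := id) hmem (Finset.mem_inter.mpr ⟨hxPi, hx⟩)
  have hFnonempty : F.Nonempty := by
    rcases Finset.nonempty_iff_ne_empty.mpr hTne with ⟨x, hx⟩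
    have := hFsup ▸ hx
    obtain ⟨S, hS, _⟩ := Finset.mem_sup.mp this
    exact ⟨S, hS⟩
  have hcard : 2 ≤ F.card := by
    obtain ⟨S, hS⟩ := hFnonempty
    obtain ⟨hSne, Pi, hPi, hPiS⟩ := hmemF S hS
    have hST : S ≠ T := by
      intro h
      exact hcon Pi hPi (by rw [← h, ← hPiS]; exact Finset.inter_subset_left)
    have : ¬ T ⊆ S := by
      intro h
      exact hST (Finset.Subset.antisymm (hFsup ▸ Finset.le_sup (f := id) hS) h)
    obtain ⟨x, hxT, hxS⟩ := Finset.not_subset.mp this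
    have hx : x ∈ F.sup id := hFsup ▸ hxT
    obtain ⟨S', hS', hxS'⟩ := Finset.mem_sup.mp hx
    refine Finset.one_lt_card.mpr ⟨S, hS, S', hS', ?_⟩
    rintro rfl; exact hxS hxS'
  have hcoll : IsCollection {T} := by
    constructor
    · intro S hS; rw [Finset.mem_singleton.mp hS]; exact hTne
    · simp
  have hnsub : ¬ ({T} : Finset (Finset α)) ⊆ P := by
    intro h
    exact hcon T (h (Finset.mem_singleton_self T)) Finset.Subset.rfl
  have hlt : v T < ∑ S ∈ F, v S := by
    have h1 := hstrict {T} hcoll hnsub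
    rw [hframe] at h1
    simpa [sw] using h1
  exact hsplit ⟨(P'.erase T) ∪ F, T, hT, F,
    ⟨⟨fun S hS => (hmemF S hS).1, hFdisj⟩, hFsup⟩, hcard, hlt, rfl⟩


/-- Lemma 1: if a strictly `D_c`-stable partition exists, every partition closed
under the merge and split rules equals it. -/

theorem closed_eq_strictly_Dc_stable [Nonempty α] (v : Finset α → ℝ) (hv : v ∅ = 0)
    (P P' : Finset (Finset α)) (hP : IsPartition P) (hstrict : StrictlyDcStable v P)
    (hP' : IsPartition P')
    (hmerge : ¬ ∃ Q : Finset (Finset α), MergeStep v P' Q)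
    (hsplit : ¬ ∃ Q : Finset (Finset α), SplitStep v P' Q) :
    P' = P := by
  have hA := stepA v P P' hP hstrict hP' hsplit
  -- Step B: every cell of P is in P'
  have hB : ∀ Pi ∈ P, Pi ∈ P' := by
    intro Pi hPi
    set C : Finset (Finset α) := P'.filter (fun S => S ⊆ Pi) with hCdef
    have hCsub : C ⊆ P' := Finset.filter_subset _ _
    have hCsup : C.sup id = Pi := by
      apply Finset.Subset.antisymm
      · intro x hx
        obtain ⟨S, hS, hxS⟩ := Finset.mem_sup.mp hx
        exact (Finset.mem_filter.mp hS).2 hxS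
      · intro x hx
        obtain ⟨T, hT, hxT⟩ := cover hP' x
        obtain ⟨Pj, hPj, hTPj⟩ := hA T hT
        have : Pj = Pi := pd_eq hP.1.2 hPj hPi (hTPj hxT) hx
        have hTC : T ∈ C := Finset.mem_filter.mpr ⟨hT, this ▸ hTPj⟩
        exact Finset.le_sup (f := id) hTC hxT
    have hPine : Pi ≠ ∅ := hP.1.1 Pi hPi
    have hCne : C.Nonempty := by
      obtain ⟨x, hx⟩ := Finset.nonempty_iff_ne_empty.mpr hPine
      have := hCsup ▸ hx
      obtain ⟨S, hS, _⟩ := Finset.mem_sup.mp this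
      exact ⟨S, hS⟩
    by_cases h2 : 2 ≤ C.card
    · exfalso
      apply hmerge
      refine ⟨insert (C.sup id) (P' \ C), C, hCsub, h2, ?_, rfl⟩
      have hnsub : ¬ C ⊆ P := by
        intro hsub
        obtain ⟨T1, hT1, T2, hT2, hne⟩ := Finset.one_lt_card.mp h2
        have hT1Pi : T1 ⊆ Pi := (Finset.mem_filter.mp hT1).2
        have hT2Pi : T2 ⊆ Pi := (Finset.mem_filter.mp hT2).2
        obtain ⟨x1, hx1⟩ := Finset.nonempty_iff_ne_empty.mpr (hP'.1.1 T1 (hCsub hT1))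
        obtain ⟨x2, hx2⟩ := Finset.nonempty_iff_ne_empty.mpr (hP'.1.1 T2 (hCsub hT2))
        have e1 : T1 = Pi := pd_eq hP.1.2 (hsub hT1) hPi hx1 (hT1Pi hx1)
        have e2 : T2 = Pi := pd_eq hP.1.2 (hsub hT2) hPi hx2 (hT2Pi hx2)
        exact hne (e1.trans e2.symm)
      have hcoll : IsCollection C := ⟨fun S hS => hP'.1.1 S (hCsub hS),
        hP'.1.2.subset (by exact_mod_cast hCsub)⟩
      have hframe : frame C P = {Pi} := by
        apply Finset.ext
        intro S
        simp only [frame, Finset.mem_erase, Finset.mem_image, Finset.mem_singleton, hCsup]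
        constructor
        · rintro ⟨hSne, Pj, hPj, rfl⟩
          obtain ⟨x, hx⟩ := Finset.nonempty_iff_ne_empty.mpr hSne
          have := pd_eq hP.1.2 hPj hPi (Finset.mem_inter.mp hx).1 (Finset.mem_inter.mp hx).2
          rw [this, Finset.inter_self]
        · intro hSPi
          rw [hSPi]
          exact ⟨hPine, Pi, hPi, Finset.inter_self Pi⟩
      have h1 := hstrict C hcoll hnsub
      rw [hframe] at h1
      rw [hCsup]
      simpa [sw] using h1
    · have h1 : C.card = 1 := by
        have := Finset.card_pos.mpr hCne
        omega
      obtain ⟨T, hT⟩ := Finset.card_eq_one.mp h1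
      have : T = Pi := by
        rw [hT] at hCsup
        simpa using hCsup
      have hTC : T ∈ C := by rw [hT]; exact Finset.mem_singleton_self T
      exact this ▸ hCsub hTC
  apply Finset.Subset.antisymm
  · intro T hT
    obtain ⟨Pi, hPi, hTPi⟩ := hA T hT
    obtain ⟨x, hx⟩ := Finset.nonempty_iff_ne_empty.mpr (hP'.1.1 T hT)
    have : T = Pi := pd_eq hP'.1.2 hT (hB Pi hPi) hx (hTPi hx)
    exact this ▸ hPi
  · intro Pi hPi
    exact hB Pi hPi
end

section
/- Suppose P is a strictly D_c-stable partition of N. Then P is the outcome of every iteration of the merge and split rules: every sequence of applications of the merge and split rules starting from an arbitrary partition of N terminates, and its final partition (to which neither rule can be applied) equals P. -/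
open Finset

variable {α : Type*} [DecidableEq α] [Fintype α]

section Aux

variable {v : Finset α → ℝ} {P P' : Finset (Finset α)}

lemma merge_sw (hP : IsPartition P) (h : MergeStep v P P') : sw v P < sw v P' := by
  obtain ⟨T, hTP, hcard, hlt, rfl⟩ := h
  obtain ⟨S₀, hS₀⟩ := card_pos.mp (by omega : 0 < T.card)
  have hS₀ne : S₀ ≠ ∅ := hP.1.1 S₀ (hTP hS₀)
  have hnot : T.sup id ∉ P \ T := by
    intro hmem
    rw [mem_sdiff] at hmem
    have hne : T.sup id ≠ S₀ := fun h => hmem.2 (h ▸ hS₀)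
    have hd : Disjoint (T.sup id) S₀ := hP.1.2 hmem.1 (hTP hS₀) hne
    have hle : S₀ ≤ T.sup id := le_sup (f := id) hS₀
    have : S₀ ≤ ⊥ := hd hle le_rfl
    exact hS₀ne (by simpa using this)
  have hsd : ∑ S ∈ P \ T, v S + ∑ S ∈ T, v S = ∑ S ∈ P, v S := sum_sdiff hTP
  unfold sw
  rw [sum_insert hnot]
  linarith

lemma split_sw (hP : IsPartition P) (h : SplitStep v P P') : sw v P < sw v P' := by
  obtain ⟨T, hT, D, hD, hcard, hlt, rfl⟩ := h
  have hdisj : Disjoint (P.erase T) D := by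
    rw [disjoint_left]
    intro S hSe hSD
    have hSne : S ≠ ∅ := hD.1.1 S hSD
    have hle : S ≤ T := hD.2 ▸ le_sup (f := id) hSD
    have hd : Disjoint S T := hP.1.2 (mem_of_mem_erase hSe) hT (ne_of_mem_erase hSe)
    exact hSne (by simpa using hd le_rfl hle)
  have he : ∑ S ∈ P.erase T, v S + v T = ∑ S ∈ P, v S := sum_erase_add P v hT
  unfold sw
  rw [sum_union hdisj]
  linarith

lemma merge_part (hP : IsPartition P) (h : MergeStep v P P') : IsPartition P' := by
  obtain ⟨T, hTP, hcard, hlt, rfl⟩ := h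
  obtain ⟨S₀, hS₀⟩ := card_pos.mp (by omega : 0 < T.card)
  have hS₀ne : S₀ ≠ ∅ := hP.1.1 S₀ (hTP hS₀)
  refine ⟨⟨?_, ?_⟩, ?_⟩
  · intro S hS
    rcases mem_insert.mp hS with rfl | hS
    · intro hemp
      have hle : S₀ ≤ T.sup id := le_sup (f := id) hS₀
      rw [hemp] at hle
      exact hS₀ne (by simpa using hle)
    · exact hP.1.1 S (mem_sdiff.mp hS).1
  · intro x hx y hy hxy
    simp only [coe_insert, Set.mem_insert_iff, mem_coe] at hx hy
    have key : ∀ z ∈ P \ T, Disjoint (T.sup id) z := by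
      intro z hz
      rw [mem_sdiff] at hz
      rw [Finset.disjoint_left]
      intro a ha haz
      obtain ⟨S, hST, haS⟩ := mem_sup.mp ha
      have hSz : S ≠ z := fun h => hz.2 (h ▸ hST)
      exact (Finset.disjoint_left.mp (hP.1.2 (hTP hST) hz.1 hSz)) haS haz
    rcases hx with rfl | hx <;> rcases hy with rfl | hy
    · exact absurd rfl hxy
    · exact key y hy
    · exact (key x hx).symm
    · exact hP.1.2 (mem_sdiff.mp hx).1 (mem_sdiff.mp hy).1 hxy
  · rw [sup_insert]
    have : T.sup id ⊔ (P \ T).sup id = (T ∪ (P \ T)).sup id := (sup_union).symm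
    rw [show (id (T.sup id) : Finset α) = T.sup id from rfl, this,
      Finset.union_sdiff_of_subset hTP, hP.2]

lemma split_part (hP : IsPartition P) (h : SplitStep v P P') : IsPartition P' := by
  obtain ⟨T, hT, D, hD, hcard, hlt, rfl⟩ := h
  refine ⟨⟨?_, ?_⟩, ?_⟩
  · intro S hS
    rcases mem_union.mp hS with hS | hS
    · exact hP.1.1 S (mem_of_mem_erase hS)
    · exact hD.1.1 S hS
  · intro x hx y hy hxy
    simp only [coe_union, Set.mem_union, mem_coe] at hx hy
    have key : ∀ z ∈ P.erase T, ∀ w ∈ D, Disjoint z w := by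
      intro z hz w hw
      have hwT : w ≤ T := hD.2 ▸ le_sup (f := id) hw
      exact (hP.1.2 (mem_of_mem_erase hz) hT (ne_of_mem_erase hz)).mono_right hwT
    rcases hx with hx | hx <;> rcases hy with hy | hy
    · exact hP.1.2 (mem_of_mem_erase hx) (mem_of_mem_erase hy) hxy
    · exact key x hx y hy
    · exact (key y hy x hx).symm
    · exact hD.1.2 hx hy hxy
  · rw [sup_union, hD.2]
    have : (P.erase T).sup id ⊔ T = (insert T (P.erase T)).sup id := by
      rw [sup_insert]; exact sup_comm _ _
    rw [this, insert_erase hT, hP.2]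

lemma part_subset_eq {Q : Finset (Finset α)} (hP : IsPartition P) (hQ : IsPartition Q)
    (hQP : Q ⊆ P) : Q = P := by
  refine Subset.antisymm hQP (fun S hS => ?_)
  obtain ⟨a, ha⟩ := nonempty_iff_ne_empty.mpr (hP.1.1 S hS)
  have : a ∈ Q.sup id := hQ.2 ▸ mem_univ a
  obtain ⟨S', hS', haS'⟩ := mem_sup.mp this
  rcases eq_or_ne S' S with rfl | hne
  · exact hS'
  · exact (Finset.disjoint_left.mp (hP.1.2 (hQP hS') hS hne) haS' ha).elim
    
lemma exists_split (hP : IsPartition P) (hstrict : StrictlyDcStable v P)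
    {Q : Finset (Finset α)} (hQ : IsPartition Q) (hne : Q ≠ P) :
    ∃ R, SplitStep v Q R := by
  have hns : ¬ Q ⊆ P := fun h => hne (part_subset_eq hP hQ h)
  obtain ⟨T, hTQ, hTP⟩ := not_subset.mp hns
  have hcoll : IsCollection {T} := by
    refine ⟨fun S hS => ?_, ?_⟩
    · rw [mem_singleton] at hS; exact hS ▸ hQ.1.1 T hTQ
    · simp [Set.PairwiseDisjoint]
  have hnsub : ¬ ({T} : Finset (Finset α)) ⊆ P := by
    simpa [singleton_subset_iff] using hTP
  have hgt := hstrict {T} hcoll hnsub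
  have hsupT : ({T} : Finset (Finset α)).sup id = T := by simp
  set D := frame {T} P with hDdef
  have hswT : sw v {T} = v T := by simp [sw]
  have hDsup : D.sup id = T := by
    rw [hDdef]
    unfold frame
    rw [hsupT]
    rw [show (∅ : Finset α) = (⊥ : Finset α) from rfl, sup_erase_bot, sup_image]
    have : (id ∘ fun Pi => Pi ∩ T) = fun Pi : Finset α => id Pi ⊓ T := by
      funext Pi; simp [inf_eq_inter]
    rw [this, ← sup_inf_distrib_right, hP.2]
    simp
  have hDne : ∀ S ∈ D, S ≠ ∅ := fun S hS => ne_of_mem_erase hS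
  have hDpart : IsPartitionOf T D := by
    refine ⟨⟨hDne, ?_⟩, hDsup⟩
    intro x hx y hy hxy
    rw [hDdef] at hx hy
    unfold frame at hx hy
    rw [hsupT] at hx hy
    obtain ⟨Pi, hPi, hxe⟩ := mem_image.mp (mem_of_mem_erase hx)
    obtain ⟨Pj, hPj, hye⟩ := mem_image.mp (mem_of_mem_erase hy)
    have hij : Pi ≠ Pj := fun h => hxy (by rw [← hxe, ← hye, h])
    have := hP.1.2 hPi hPj hij
    subst hxe hye
    exact Disjoint.mono inter_subset_left inter_subset_left this
  have hTne : T ≠ ∅ := hQ.1.1 T hTQ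
  have hDcard : 2 ≤ D.card := by
    rcases Nat.lt_or_ge D.card 2 with hlt | hge
    · exfalso
      interval_cases h : D.card
      · rw [card_eq_zero] at h
        exact hTne (by rw [← hDsup, h]; simp)
      · obtain ⟨S, hSe⟩ := card_eq_one.mp h
        have hST : S = T := by rw [← hDsup, hSe]; simp
        have : sw v D = v T := by simp [hSe, sw, hST]
        rw [this, hswT] at hgt
        exact lt_irrefl _ hgt
    · exact hge
  refine ⟨(Q.erase T) ∪ D, T, hTQ, D, hDpart, hDcard, ?_, rfl⟩
  calc v T = sw v {T} := hswT.symm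
    _ < sw v D := hgt
    _ = ∑ S ∈ D, v S := rfl

end Aux
/-- Theorem 9(i): a strictly `D_c`-stable partition is the outcome of every iteration
of the merge and split rules: every such iteration terminates, and every terminal
partition reachable from an arbitrary initial partition equals `P`. -/
theorem strictly_Dc_stable_outcome [Nonempty α] (v : Finset α → ℝ) (hv : v ∅ = 0)
    (P : Finset (Finset α)) (hP : IsPartition P) (hstrict : StrictlyDcStable v P) :
    (¬ ∃ f : ℕ → Finset (Finset α), (∀ n, IsPartition (f n)) ∧
        ∀ n, MergeStep v (f n) (f (n + 1)) ∨ SplitStep v (f n) (f (n + 1))) ∧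
    (∀ Q Q' : Finset (Finset α), IsPartition Q →
      Relation.ReflTransGen (fun a b => MergeStep v a b ∨ SplitStep v a b) Q Q' →
      (¬ ∃ R : Finset (Finset α), MergeStep v Q' R) →
      (¬ ∃ R : Finset (Finset α), SplitStep v Q' R) →
      Q' = P) := by
  constructor
  · rintro ⟨f, hpart, hstep⟩
    have hmono : StrictMono (fun n => sw v (f n)) := by
      apply strictMono_nat_of_lt_succ
      intro n
      rcases hstep n with h | h
      · exact merge_sw (hpart n) h
      · exact split_sw (hpart n) h
    have hinj : Function.Injective f := fun m n h =>
      hmono.injective (by simp [h])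
    obtain ⟨m, n, hmn, he⟩ := Finite.exists_ne_map_eq_of_infinite f
    exact hmn (hinj he)
  · intro Q Q' hQ hrel hm hs
    have hQ' : IsPartition Q' := by
      clear hm hs
      induction hrel with
      | refl => exact hQ
      | tail _ h ih =>
        rcases h with h | h
        · exact merge_part ih h
        · exact split_part ih h
    by_contra hne
    exact hs (exists_split hP hstrict hQ' hne)
end

section
/- Suppose P is a strictly D_c-stable partition of N. Then P is the unique D_c-stable partition of N, the unique D_p-stable partition of N, and the unique D_hp-stable partition of N. -/
open Finset

variable {α : Type*} [DecidableEq α] [Fintype α]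

section AuxLemmas

lemma partition_eq_of_mem_inter {P : Finset (Finset α)} (hP : IsPartition P)
    {A B : Finset α} (hA : A ∈ P) (hB : B ∈ P) {x : α} (hxA : x ∈ A) (hxB : x ∈ B) :
    A = B := by
  by_contra h
  exact (Finset.disjoint_left.mp (hP.1.2 hA hB h)) hxA hxB

lemma frame_of_subset {P C : Finset (Finset α)} (hP : IsPartition P)
    (hCP : C ⊆ P) (hCne : ∀ S ∈ C, S ≠ ∅) : frame C P = C := by
  ext S
  simp only [frame, Finset.mem_erase, Finset.mem_image]
  constructor
  · rintro ⟨hSne, Pi, hPi, rfl⟩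
    by_cases h : Pi ∈ C
    · have hsub : Pi ⊆ C.sup id := Finset.le_sup (f := id) h
      rwa [Finset.inter_eq_left.mpr hsub]
    · exfalso
      apply hSne
      ext x
      simp only [Finset.mem_inter, Finset.notMem_empty, iff_false, not_and]
      intro hxPi hxU
      obtain ⟨Sj, hSj, hxSj⟩ := Finset.mem_sup.mp hxU
      exact h ((partition_eq_of_mem_inter hP hPi (hCP hSj) hxPi hxSj) ▸ hSj)
  · intro hS
    exact ⟨hCne S hS, S, hCP hS, Finset.inter_eq_left.mpr (Finset.le_sup (f := id) hS)⟩

lemma frame_of_sup_univ {P C : Finset (Finset α)} (hP : IsPartition P)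
    (hC : C.sup id = Finset.univ) : frame C P = P := by
  unfold frame
  rw [hC]
  simp only [Finset.inter_univ, Finset.image_id']
  exact Finset.erase_eq_of_notMem (fun h => hP.1.1 ∅ h rfl)

lemma partition_subset_eq {P Q : Finset (Finset α)} (hP : IsPartition P) (hQ : IsPartition Q)
    (h : Q ⊆ P) : Q = P := by
  apply Finset.Subset.antisymm h
  intro Pi hPi
  obtain ⟨x, hx⟩ := Finset.nonempty_iff_ne_empty.mpr (hP.1.1 Pi hPi)
  have hxU : x ∈ Q.sup id := hQ.2 ▸ Finset.mem_univ x
  obtain ⟨Qj, hQj, hxQj⟩ := Finset.mem_sup.mp hxU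
  rwa [partition_eq_of_mem_inter hP hPi (h hQj) hx hxQj]

lemma strictlyDp_of_strictlyDc {v : Finset α → ℝ} {P : Finset (Finset α)}
    (hP : IsPartition P) (hstrict : StrictlyDcStable v P) : StrictlyDpStable v P := by
  intro Q hQ hne
  have hns : ¬ Q ⊆ P := fun h => hne (partition_subset_eq hP hQ h)
  have h := hstrict Q hQ.1 hns
  rwa [frame_of_sup_univ hP hQ.2] at h

lemma dhp_unique_aux {v : Finset α → ℝ} {P Q : Finset (Finset α)}
    (hP : IsPartition P) (hstrict : StrictlyDcStable v P)
    (hQ : IsPartition Q) (hQhp : DhpStable v Q) : Q = P := by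
  by_contra hne
  by_cases hcase : ∀ Qj ∈ Q, ∃ Pi ∈ P, Qj ⊆ Pi
  · -- every block of Q is contained in a block of P
    obtain ⟨Pi, hPiP, hPiQ⟩ : ∃ Pi ∈ P, Pi ∉ Q := by
      by_contra h
      push_neg at h
      exact hne (partition_subset_eq hQ hP h).symm
    set D := Q.filter (fun S => S ⊆ Pi) with hD
    set E := Q.filter (fun S => ¬ S ⊆ Pi) with hE
    have hDsup : D.sup id = Pi := by
      apply le_antisymm
      · exact Finset.sup_le (fun S hS => (Finset.mem_filter.mp hS).2)
      · intro x hx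
        have hxU : x ∈ Q.sup id := hQ.2 ▸ Finset.mem_univ x
        obtain ⟨Qj, hQj, hxQj⟩ := Finset.mem_sup.mp hxU
        obtain ⟨Pk, hPk, hQjPk⟩ := hcase Qj hQj
        have hPkPi : Pk = Pi := partition_eq_of_mem_inter hP hPk hPiP (hQjPk hxQj) hx
        exact Finset.mem_sup.mpr ⟨Qj, Finset.mem_filter.mpr ⟨hQj, hPkPi ▸ hQjPk⟩, hxQj⟩
    have hPine : Pi ≠ ∅ := hP.1.1 Pi hPiP
    obtain ⟨x, hx⟩ := Finset.nonempty_iff_ne_empty.mpr hPine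
    obtain ⟨Qj, hQjD, hxQj⟩ := Finset.mem_sup.mp (show x ∈ D.sup id from hDsup ▸ hx)
    have hQjQ : Qj ∈ Q := (Finset.mem_filter.mp hQjD).1
    have hDP : ¬ D ⊆ P := by
      intro h
      have hQjP := h hQjD
      have heq : Qj = Pi := partition_eq_of_mem_inter hP hQjP hPiP hxQj hx
      exact hPiQ (heq ▸ hQjQ)
    have hDcol : IsCollection D :=
      ⟨fun S hS => hQ.1.1 S (Finset.filter_subset _ _ hS),
       hQ.1.2.subset (Finset.coe_subset.mpr (Finset.filter_subset _ _))⟩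
    have hgt := hstrict D hDcol hDP
    have hframe : frame D P = {Pi} := by
      have h1 : frame ({Pi} : Finset (Finset α)) P = {Pi} :=
        frame_of_subset hP (Finset.singleton_subset_iff.mpr hPiP) (by simpa using hPine)
      unfold frame at h1 ⊢
      rw [Finset.sup_singleton] at h1
      rwa [hDsup]
    rw [hframe] at hgt
    have hgt' : v Pi > ∑ S ∈ D, v S := by simpa [sw] using hgt
    have hPiE : Pi ∉ E := fun h => hPiQ (Finset.filter_subset _ _ h)
    have hRpart : IsPartition (insert Pi E) := by
      refine ⟨⟨?_, ?_⟩, ?_⟩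
      · intro S hS
        rcases Finset.mem_insert.mp hS with rfl | hS
        · exact hPine
        · exact hQ.1.1 S (Finset.filter_subset _ _ hS)
      · rw [Finset.coe_insert]
        apply Set.PairwiseDisjoint.insert
          (hQ.1.2.subset (Finset.coe_subset.mpr (Finset.filter_subset _ _)))
        intro Qk hQk hne'
        have hQkE : Qk ∈ E := Finset.mem_coe.mp hQk
        have hQkQ := (Finset.mem_filter.mp hQkE).1
        have hQknPi := (Finset.mem_filter.mp hQkE).2
        rw [Finset.disjoint_left]
        intro a haPi haQk
        obtain ⟨Pk, hPk, hQkPk⟩ := hcase Qk hQkQ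
        have hPkPi : Pk = Pi := partition_eq_of_mem_inter hP hPk hPiP (hQkPk haQk) haPi
        exact hQknPi (hPkPi ▸ hQkPk)
      · apply Finset.Subset.antisymm (Finset.subset_univ _)
        intro y _
        have hyU : y ∈ Q.sup id := hQ.2 ▸ Finset.mem_univ y
        obtain ⟨Qk, hQk, hyQk⟩ := Finset.mem_sup.mp hyU
        by_cases hsub : Qk ⊆ Pi
        · exact Finset.mem_sup.mpr ⟨Pi, Finset.mem_insert_self _ _, hsub hyQk⟩
        · exact Finset.mem_sup.mpr
            ⟨Qk, Finset.mem_insert_of_mem (Finset.mem_filter.mpr ⟨hQk, hsub⟩), hyQk⟩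
    have hhom : Homogeneous Q (insert Pi E) := by
      intro S hS
      rcases Finset.mem_insert.mp hS with rfl | hS
      · exact ⟨Qj, hQjQ, Or.inr (Finset.mem_filter.mp hQjD).2⟩
      · exact ⟨S, Finset.filter_subset _ _ hS, Or.inl subset_rfl⟩
    have hle := hQhp _ hRpart hhom
    have hsum : sw v (insert Pi E) = v Pi + sw v E := by
      rw [sw, Finset.sum_insert hPiE]; rfl
    have hQsum : sw v Q = sw v D + sw v E :=
      (Finset.sum_filter_add_sum_filter_not Q _ v).symm
    rw [hsum, hQsum] at hle
    have : sw v D = ∑ S ∈ D, v S := rfl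
    linarith
  · -- some block of Q meets several blocks of P
    push_neg at hcase
    obtain ⟨Qj, hQjQ, hQjP⟩ := hcase
    have hQjne : Qj ≠ ∅ := hQ.1.1 Qj hQjQ
    have hsing : IsCollection ({Qj} : Finset (Finset α)) :=
      ⟨by simpa using hQjne, by simp⟩
    have hnsub : ¬ ({Qj} : Finset (Finset α)) ⊆ P := by
      rw [Finset.singleton_subset_iff]
      intro h
      exact hQjP Qj h subset_rfl
    have hgt := hstrict _ hsing hnsub
    set F := frame ({Qj} : Finset (Finset α)) P with hF
    have hUeq : ({Qj} : Finset (Finset α)).sup id = Qj := Finset.sup_singleton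
    have hFmem : ∀ S ∈ F, S ≠ ∅ ∧ ∃ Pi ∈ P, Pi ∩ Qj = S := by
      intro S hS
      simp only [hF, frame, hUeq, Finset.mem_erase, Finset.mem_image] at hS
      exact ⟨hS.1, hS.2⟩
    have hFsubQj : ∀ S ∈ F, S ⊆ Qj := by
      intro S hS
      obtain ⟨-, Pi, -, rfl⟩ := hFmem S hS
      exact Finset.inter_subset_right
    have hdisj : Disjoint F (Q.erase Qj) := by
      rw [Finset.disjoint_left]
      intro S hSF hSE
      obtain ⟨hSne, Pi, hPi, rfl⟩ := hFmem S hSF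
      obtain ⟨hne', hSQ⟩ := Finset.mem_erase.mp hSE
      obtain ⟨y, hy⟩ := Finset.nonempty_iff_ne_empty.mpr hSne
      exact hne' (partition_eq_of_mem_inter hQ hSQ hQjQ hy (Finset.mem_inter.mp hy).2)
    have hRpart : IsPartition (Q.erase Qj ∪ F) := by
      refine ⟨⟨?_, ?_⟩, ?_⟩
      · intro S hS
        rcases Finset.mem_union.mp hS with hS | hS
        · exact hQ.1.1 S (Finset.erase_subset _ _ hS)
        · exact (hFmem S hS).1
      · rw [Finset.coe_union]
        rw [Set.pairwiseDisjoint_union]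
        refine ⟨hQ.1.2.subset (Finset.coe_subset.mpr (Finset.erase_subset _ _)), ?_, ?_⟩
        · intro S hSF T hTF hne'
          obtain ⟨hSne, Pi, hPi, rfl⟩ := hFmem S (Finset.mem_coe.mp hSF)
          obtain ⟨hTne, Pk, hPk, rfl⟩ := hFmem T (Finset.mem_coe.mp hTF)
          show Disjoint (Pi ∩ Qj) (Pk ∩ Qj)
          rw [Finset.disjoint_left]
          intro a haS haT
          have hik : Pi = Pk := partition_eq_of_mem_inter hP hPi hPk
            (Finset.mem_inter.mp haS).1 (Finset.mem_inter.mp haT).1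
          exact hne' (by rw [hik])
        · intro S hSE T hTF hne'
          obtain ⟨hne'', hSQ⟩ := Finset.mem_erase.mp (Finset.mem_coe.mp hSE)
          have hd : Disjoint S Qj := hQ.1.2 hSQ hQjQ hne''
          exact hd.mono_right (hFsubQj T (Finset.mem_coe.mp hTF))
      · apply Finset.Subset.antisymm (Finset.subset_univ _)
        intro y _
        have hyU : y ∈ Q.sup id := hQ.2 ▸ Finset.mem_univ y
        obtain ⟨Qk, hQk, hyQk⟩ := Finset.mem_sup.mp hyU
        by_cases hkj : Qk = Qj
        · subst hkj
          have hyP : y ∈ P.sup id := hP.2 ▸ Finset.mem_univ y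
          obtain ⟨Pi, hPi, hyPi⟩ := Finset.mem_sup.mp hyP
          have hmemF : Pi ∩ Qk ∈ F := by
            simp only [hF, frame, hUeq, Finset.mem_erase, Finset.mem_image]
            exact ⟨fun h0 => by simpa [h0] using Finset.mem_inter.mpr ⟨hyPi, hyQk⟩,
              Pi, hPi, rfl⟩
          exact Finset.mem_sup.mpr ⟨Pi ∩ Qk, Finset.mem_union_right _ hmemF,
            Finset.mem_inter.mpr ⟨hyPi, hyQk⟩⟩
        · exact Finset.mem_sup.mpr
            ⟨Qk, Finset.mem_union_left _ (Finset.mem_erase.mpr ⟨hkj, hQk⟩), hyQk⟩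
    have hhom : Homogeneous Q (Q.erase Qj ∪ F) := by
      intro S hS
      rcases Finset.mem_union.mp hS with hS | hS
      · exact ⟨S, Finset.erase_subset _ _ hS, Or.inl subset_rfl⟩
      · exact ⟨Qj, hQjQ, Or.inl (hFsubQj S hS)⟩
    have hle := hQhp _ hRpart hhom
    have hsum : sw v (Q.erase Qj ∪ F) = sw v (Q.erase Qj) + sw v F := by
      rw [sw, Finset.sum_union hdisj.symm]; rfl
    have hQsum : sw v (Q.erase Qj) + v Qj = sw v Q := Finset.sum_erase_add Q v hQjQ
    have hgt' : sw v F > v Qj := by simpa [sw] using hgt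
    rw [hsum] at hle
    linarith

end AuxLemmas

/-- Theorem 9(ii)-(iv): a strictly `D_c`-stable partition is the unique `D_c`-stable,
the unique `D_p`-stable, and the unique `D_hp`-stable partition. -/
theorem strictly_Dc_stable_unique [Nonempty α] (v : Finset α → ℝ) (hv : v ∅ = 0)
    (P : Finset (Finset α)) (hP : IsPartition P) (hstrict : StrictlyDcStable v P) :
    (DcStable v P ∧ ∀ Q : Finset (Finset α), IsPartition Q → DcStable v Q → Q = P) ∧
    (DpStable v P ∧ ∀ Q : Finset (Finset α), IsPartition Q → DpStable v Q → Q = P) ∧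
    (DhpStable v P ∧ ∀ Q : Finset (Finset α), IsPartition Q → DhpStable v Q → Q = P) := by
  have hsDp : StrictlyDpStable v P := strictlyDp_of_strictlyDc hP hstrict
  have hDc : DcStable v P := by
    intro C hC
    by_cases h : C ⊆ P
    · rw [frame_of_subset hP h hC.1]
    · exact (hstrict C hC h).le
  have hDp : DpStable v P := by
    intro Q hQ
    by_cases h : Q = P
    · subst h; exact le_refl _
    · exact (hsDp Q hQ h).le
  have hDhp : DhpStable v P := fun Q hQ _ => hDp Q hQ
  refine ⟨⟨hDc, ?_⟩, ⟨hDp, ?_⟩, ⟨hDhp, fun Q hQ hQhp => dhp_unique_aux hP hstrict hQ hQhp⟩⟩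
  · intro Q hQ hQDc
    by_contra hne
    have h1 := hQDc P hP.1
    rw [frame_of_sup_univ hQ hP.2] at h1
    have h2 := hsDp Q hQ hne
    exact absurd h1 (not_le.mpr h2)
  · intro Q hQ hQDp
    by_contra hne
    exact absurd (hQDp P hP) (not_le.mpr (hsDp Q hQ hne))
end
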